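/- For every x ∈ [0,1)^V one has \tilde f_G(x) = f_G((x_v/(1-x_v))_{v∈V}), as an equality of sums valued in the extended interval [0,∞]. -/

import Mathlib

open scoped Classical ENNReal

set_option linter.unusedSectionVars false

variable {V : Type*} [Fintype V] [DecidableEq V]

/-- An admissible swap exchanges two consecutive letters that are adjacent in `G`. -/
def AdjSwap (G : SimpleGraph V) (w w' : List V) : Prop :=
  ∃ (a b : List V) (u v : V), G.Adj u v ∧ w = a ++ u :: v :: b ∧ w' = a ++ v :: u :: b

/-- Two words are equivalent if one can be transformed into the other by finitely many
admissible swaps. -/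
def WordEquiv (G : SimpleGraph V) : List V → List V → Prop :=
  Relation.ReflTransGen (AdjSwap G)

lemma adjSwap_symm (G : SimpleGraph V) : Symmetric (AdjSwap G) := by
  rintro w w' ⟨a, b, u, v, h, rfl, rfl⟩
  exact ⟨a, b, v, u, h.symm, rfl, rfl⟩

/-- The setoid of words modulo admissible swaps. -/
def wordSetoid (G : SimpleGraph V) : Setoid (List V) where
  r := WordEquiv G
  iseqv := ⟨fun _ => Relation.ReflTransGen.refl,
    fun {a b} (h : Relation.ReflTransGen (AdjSwap G) a b) =>
      show Relation.ReflTransGen (AdjSwap G) b a by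
        induction h with
        | refl => exact Relation.ReflTransGen.refl
        | tail _ hs ih => exact Relation.ReflTransGen.head (adjSwap_symm G hs) ih,
    fun h h' => Relation.ReflTransGen.trans h h'⟩

/-- A word is `G`-reduced if between any two equal letters there is a letter distinct from
them and not adjacent to them. -/
def IsGReduced (G : SimpleGraph V) (w : List V) : Prop :=
  ∀ i j : Fin w.length, i < j → w.get i = w.get j →
    ∃ k : Fin w.length, i < k ∧ k < j ∧ w.get k ≠ w.get i ∧ ¬ G.Adj (w.get k) (w.get i)

/-- The product `x_{w_1} ⋯ x_{w_ℓ}` depends only on the equivalence class of a word. -/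
noncomputable def classProd (G : SimpleGraph V) (x : V → ℝ≥0∞) :
    Quotient (wordSetoid G) → ℝ≥0∞ :=
  Quotient.lift (fun w : List V => (w.map x).prod) (by
    intro a b h
    induction h with
    | refl => rfl
    | tail _ hs ih =>
        obtain ⟨a', b', u, v, huv, rfl, rfl⟩ := hs
        rw [ih]
        simp only [List.map_append, List.prod_append, List.map_cons, List.prod_cons]
        ring)

/-- `tildeF G x` : the sum over all equivalence classes of words of `∏ x_{w_i}`,
valued in `[0,∞]`. -/
noncomputable def tildeF (G : SimpleGraph V) (x : V → ℝ) : ℝ≥0∞ :=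
  ∑' c : Quotient (wordSetoid G), classProd G (fun v => ENNReal.ofReal (x v)) c

/-- `redF G x` : the sum over all equivalence classes of `G`-reduced words of `∏ x_{w_i}`,
valued in `[0,∞]`. -/
noncomputable def redF (G : SimpleGraph V) (x : V → ℝ) : ℝ≥0∞ :=
  ∑' c : {c : Quotient (wordSetoid G) // ∃ w, IsGReduced G w ∧ Quotient.mk (wordSetoid G) w = c},
    classProd G (fun v => ENNReal.ofReal (x v)) c.1

/-- The clique polynomial `𝕶_{G,V'}(x) = ∑_{cliques K ⊆ V'} (-1)^{|K|} ∏_{v ∈ K} x_v`. -/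
noncomputable def cliquePoly (G : SimpleGraph V) (V' : Finset V) (x : V → ℝ) : ℝ :=
  ∑ K ∈ V'.powerset.filter (fun K : Finset V => G.IsClique (K : Set V)),
    (-1 : ℝ) ^ K.card * ∏ v ∈ K, x v

/-- The Euclidean norm on `ℝ^V`. -/
noncomputable def eucNorm (x : V → ℝ) : ℝ := Real.sqrt (∑ v, x v ^ 2)

/-- `min_{V' ⊆ V} 𝕶_{G,V'}(x)`. -/
noncomputable def minK (G : SimpleGraph V) (x : V → ℝ) : ℝ :=
  Finset.univ.inf' ⟨∅, Finset.mem_univ _⟩ fun V' : Finset V => cliquePoly G V' x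

/-- `ρ(u) = inf {r ∈ [0,∞) : min_{V' ⊆ V} 𝕶_{G,V'}(r·u) = 0}`. -/
noncomputable def rho (G : SimpleGraph V) (u : V → ℝ) : ℝ :=
  sInf {r : ℝ | 0 ≤ r ∧ minK G (r • u) = 0}

/-- The region `R(G) = {x ∈ [0,1]^V : 𝕶_{G,V'}(x) > 0 for all V' ⊆ V}`. -/
def regionR (G : SimpleGraph V) : Set (V → ℝ) :=
  {x | (∀ v, x v ∈ Set.Icc (0 : ℝ) 1) ∧ ∀ V' : Finset V, 0 < cliquePoly G V' x}


section General
variable {α : Type*} {G : SimpleGraph α}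

lemma WordEquiv.rfl {w : List α} : WordEquiv G w w := Relation.ReflTransGen.refl

lemma WordEquiv.symm {w w' : List α} (h : WordEquiv G w w') : WordEquiv G w' w :=
  by
  induction h with
  | refl => exact Relation.ReflTransGen.refl
  | tail _ hs ih =>
      exact Relation.ReflTransGen.head (by
        obtain ⟨a, b, u, v, huv, rfl, rfl⟩ := hs
        exact ⟨a, b, v, u, huv.symm, _root_.rfl, _root_.rfl⟩) ih

lemma WordEquiv.trans {w₁ w₂ w₃ : List α} (h : WordEquiv G w₁ w₂) (h' : WordEquiv G w₂ w₃) :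
    WordEquiv G w₁ w₃ := Relation.ReflTransGen.trans h h'

lemma wordEquiv_of_adjSwap {w w' : List α} (h : AdjSwap G w w') : WordEquiv G w w' :=
  Relation.ReflTransGen.single h

lemma adjSwap_append_left (u : List α) {w w' : List α} (h : AdjSwap G w w') :
    AdjSwap G (u ++ w) (u ++ w') := by
  obtain ⟨a, b, p, q, hpq, rfl, rfl⟩ := h
  exact ⟨u ++ a, b, p, q, hpq, by simp, by simp⟩

lemma adjSwap_append_right (u : List α) {w w' : List α} (h : AdjSwap G w w') :
    AdjSwap G (w ++ u) (w' ++ u) := by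
  obtain ⟨a, b, p, q, hpq, rfl, rfl⟩ := h
  exact ⟨a, b ++ u, p, q, hpq, by simp, by simp⟩

lemma WordEquiv.append_left (u : List α) {w w' : List α} (h : WordEquiv G w w') :
    WordEquiv G (u ++ w) (u ++ w') := by
  induction h with
  | refl => exact WordEquiv.rfl
  | tail _ hs ih => exact ih.tail (adjSwap_append_left u hs)

lemma WordEquiv.append_right (u : List α) {w w' : List α} (h : WordEquiv G w w') :
    WordEquiv G (w ++ u) (w' ++ u) := by
  induction h with
  | refl => exact WordEquiv.rfl
  | tail _ hs ih => exact ih.tail (adjSwap_append_right u hs)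

lemma WordEquiv.cons (a : α) {w w' : List α} (h : WordEquiv G w w') :
    WordEquiv G (a :: w) (a :: w') := h.append_left [a]

lemma WordEquiv.append_congr {w w' u u' : List α} (h : WordEquiv G w w')
    (h' : WordEquiv G u u') : WordEquiv G (w ++ u) (w' ++ u') :=
  (h.append_right u).trans (h'.append_left w')

/-- moving a letter to the front past letters adjacent to it -/
lemma move_front {a : α} {p : List α} (hp : ∀ b ∈ p, G.Adj a b) (s : List α) :
    WordEquiv G (p ++ a :: s) (a :: (p ++ s)) := by
  induction p with
  | nil => exact WordEquiv.rfl
  | cons c q ih =>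
      have h1 : WordEquiv G (c :: (q ++ a :: s)) (c :: (a :: (q ++ s))) :=
        (ih (fun b hb => hp b (List.mem_cons_of_mem _ hb))).cons c
      have h2 : AdjSwap G (c :: a :: (q ++ s)) (a :: c :: (q ++ s)) :=
        ⟨[], q ++ s, c, a, (hp c (List.mem_cons_self)).symm, _root_.rfl, _root_.rfl⟩
      exact h1.trans (wordEquiv_of_adjSwap h2)

lemma move_front_replicate {a : α} {p : List α} (hp : ∀ b ∈ p, G.Adj a b) (n : ℕ) (s : List α) :
    WordEquiv G (p ++ (List.replicate n a ++ s)) (List.replicate n a ++ (p ++ s)) := by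
  induction n generalizing s with
  | zero => exact WordEquiv.rfl
  | succ m ih =>
      have h1 : WordEquiv G (p ++ (a :: (List.replicate m a ++ s)))
          (a :: (p ++ (List.replicate m a ++ s))) := move_front hp _
      have h2 : WordEquiv G (a :: (p ++ (List.replicate m a ++ s)))
          (a :: (List.replicate m a ++ (p ++ s))) := (ih s).cons a
      simpa [List.replicate_succ] using h1.trans h2

lemma wordEquiv_perm {w w' : List α} (h : WordEquiv G w w') : w.Perm w' := by
  induction h with
  | refl => exact List.Perm.refl _
  | tail _ hs ih =>
      obtain ⟨a, b, u, v, _, rfl, rfl⟩ := hs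
      exact ih.trans ((List.Perm.swap' _ _ (List.Perm.refl b)).append_left a)

/-- filter by a predicate no two distinct satisfiers of which are adjacent is invariant -/
lemma filter_eq_of_wordEquiv (p : α → Bool)
    (hp : ∀ x y, G.Adj x y → p x = true → p y = true → False)
    {w w' : List α} (h : WordEquiv G w w') : w.filter p = w'.filter p := by
  induction h with
  | refl => rfl
  | tail _ hs ih =>
      obtain ⟨a, b, u, v, huv, rfl, rfl⟩ := hs
      rw [ih]
      simp only [List.filter_append, List.filter_cons]
      by_cases hu : p u = true
      · by_cases hv : p v = true
        · exact absurd (hp u v huv hu hv) (by simp)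
        · simp [hu, hv]
      · by_cases hv : p v = true
        · simp [hu, hv]
        · simp [hu, hv]

end General

section Proj
variable {α : Type*} [DecidableEq α] {G : SimpleGraph α}

/-- projection onto the letters `u, v` -/
def proj (u v : α) (w : List α) : List α := w.filter (fun x => x == u || x == v)

@[simp] lemma proj_nil (u v : α) : proj u v ([] : List α) = [] := rfl

lemma proj_cons (u v a : α) (w : List α) :
    proj u v (a :: w) = if a = u ∨ a = v then a :: proj u v w else proj u v w := by
  simp only [proj, List.filter_cons]
  by_cases h : a = u ∨ a = v
  · rcases h with h | h <;> simp [h]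
  · push_neg at h
    simp [h.1, h.2]

lemma proj_append (u v : α) (w w' : List α) :
    proj u v (w ++ w') = proj u v w ++ proj u v w' := List.filter_append _ _

/-- a good pair: equal or non-adjacent letters -/
lemma proj_eq_of_wordEquiv {u v : α} (huv : u = v ∨ ¬ G.Adj u v)
    {w w' : List α} (h : WordEquiv G w w') : proj u v w = proj u v w' := by
  refine filter_eq_of_wordEquiv _ (fun x y hadj hx hy => ?_) h
  simp only [Bool.or_eq_true, beq_iff_eq] at hx hy
  have hne : x ≠ y := hadj.ne
  rcases hx with rfl | rfl <;> rcases hy with rfl | rfl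
  · exact hne rfl
  · rcases huv with rfl | hna
    · exact hne rfl
    · exact hna hadj
  · rcases huv with rfl | hna
    · exact hne rfl
    · exact hna hadj.symm
  · exact hne rfl

lemma count_eq_of_wordEquiv {w w' : List α} (h : WordEquiv G w w') (a : α) :
    w.count a = w'.count a := (wordEquiv_perm h).count_eq a

/-- first-occurrence decomposition -/
lemma first_occ {a : α} {w : List α} (h : a ∈ w) :
    ∃ p s, w = p ++ a :: s ∧ a ∉ p := by
  induction w with
  | nil => cases h
  | cons c t ih =>
      by_cases hc : c = a
      · exact ⟨[], t, by rw [hc]; rfl, by simp⟩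
      · obtain ⟨p, s, rfl, hp⟩ := ih (by
          rcases List.mem_cons.1 h with h | h
          · exact absurd h.symm hc
          · exact h)
        exact ⟨c :: p, s, rfl, by simp [hp]; exact fun h => hc h.symm⟩

lemma first_occ_unique {a : α} {p s q d : List α} (hpq : p ++ a :: s = q ++ a :: d)
    (hp : a ∉ p) (hq : a ∉ q) : p = q ∧ s = d := by
  induction p generalizing q with
  | nil =>
      cases q with
      | nil => simpa using hpq
      | cons c q' =>
          simp only [List.nil_append, List.cons_append, List.cons.injEq] at hpq
          exact absurd (show a ∈ c :: q' by rw [hpq.1]; exact List.mem_cons_self) hq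
  | cons c p' ih =>
      cases q with
      | nil =>
          simp only [List.cons_append, List.nil_append, List.cons.injEq] at hpq
          exact absurd (by simp [hpq.1]) hp
      | cons e q' =>
          simp only [List.cons_append, List.cons.injEq] at hpq
          obtain ⟨rfl, h2⟩ := hpq
          obtain ⟨h3, h4⟩ := ih h2 (fun hm => hp (List.mem_cons_of_mem _ hm))
            (fun hm => hq (List.mem_cons_of_mem _ hm))
          exact ⟨by rw [h3], h4⟩

/-- if every relevant projection of `w` starts with `a`, then before the first `a` in `w`
all letters are adjacent to `a` -/
lemma head_structure {a : α} {w : List α} (hmem : a ∈ w)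
    (hproj : ∀ b, b ≠ a → ¬ G.Adj a b → (proj a b w).head? = some a) :
    ∃ p s, w = p ++ a :: s ∧ a ∉ p ∧ ∀ b ∈ p, G.Adj a b := by
  obtain ⟨p, s, rfl, hp⟩ := first_occ hmem
  refine ⟨p, s, rfl, hp, fun b hb => ?_⟩
  by_contra hna
  have hba : b ≠ a := fun h => hp (h ▸ hb)
  have hheadA := hproj b hba hna
  -- proj a b (p ++ a :: s) starts with first {a,b}-letter of p, which isn't a
  have hmemb : b ∈ proj a b p := by
    simp [proj, List.mem_filter, hb]
  have hne : proj a b p ≠ [] := fun h => by simp [h] at hmemb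
  obtain ⟨c, l, hcl⟩ := List.exists_cons_of_ne_nil hne
  have hmc : c ∈ proj a b p := by simp [hcl]
  have hcp : c ∈ p := List.mem_of_mem_filter hmc
  have hheadC : (proj a b (p ++ a :: s)).head? = some c := by
    rw [proj_append, hcl]; simp
  rw [hheadA] at hheadC
  have hca : c = a := by simpa using hheadC.symm
  exact hp (hca ▸ hcp)

end Proj

section ProjHard
variable {α : Type*} [DecidableEq α] {G : SimpleGraph α}

lemma proj_comm (u v : α) (w : List α) : proj u v w = proj v u w := by
  apply List.filter_congr
  intro x _
  simp [Bool.or_comm]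

private lemma proj_nil_case (w' : List α)
    (h : ∀ u v : α, (u = v ∨ ¬ G.Adj u v) → proj u v ([] : List α) = proj u v w') :
    w' = [] := by
  cases w' with
  | nil => rfl
  | cons c t =>
      have := h c c (Or.inl rfl)
      rw [proj_cons] at this
      simp at this

/-- The hard direction of the projection lemma. -/
lemma equiv_of_proj {w w' : List α}
    (h : ∀ u v : α, (u = v ∨ ¬ G.Adj u v) → proj u v w = proj u v w') :
    WordEquiv G w w' := by
  have main : ∀ n (w w' : List α), w.length ≤ n →
      (∀ u v : α, (u = v ∨ ¬ G.Adj u v) → proj u v w = proj u v w') →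
      WordEquiv G w w' := by
    intro n
    induction n with
    | zero =>
        intro w w' hl h
        have hw : w = [] := List.eq_nil_of_length_eq_zero (Nat.le_zero.1 hl)
        subst hw
        rw [proj_nil_case w' h]
        exact WordEquiv.rfl
    | succ n ih =>
        intro w w' hl h
        cases w with
        | nil =>
            rw [proj_nil_case w' h]
            exact WordEquiv.rfl
        | cons a t =>
            -- a ∈ w'
            have haa := h a a (Or.inl rfl)
            rw [proj_cons, if_pos (Or.inl rfl)] at haa
            have hmem : a ∈ w' := by
              have : a ∈ proj a a w' := by rw [← haa]; exact List.mem_cons_self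
              exact List.mem_of_mem_filter this
            obtain ⟨p, s, rfl, hap, hpadj⟩ := head_structure hmem (fun b hba hnadj => by
              have := h a b (Or.inr hnadj)
              rw [proj_cons, if_pos (Or.inl rfl)] at this
              rw [← this]
              rfl)
            -- key projection identities for the tails
            have case1 : ∀ b, (a = b ∨ ¬ G.Adj a b) → proj a b t = proj a b (p ++ s) := by
              intro b hgood
              have hpp : proj a b p = [] := by
                rw [proj, List.filter_eq_nil_iff]
                intro c hc
                simp only [Bool.or_eq_true, beq_iff_eq, not_or]
                constructor
                · exact fun hca => hap (hca ▸ hc)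
                · intro hcb
                  rcases hgood with rfl | hnadj
                  · exact hap (hcb ▸ hc)
                  · exact hnadj (hcb ▸ hpadj c hc)
              have := h a b hgood
              rw [proj_cons, proj_append, proj_cons, hpp] at this
              simp only [if_pos (Or.inl rfl), List.nil_append] at this
              rw [proj_append, hpp, List.nil_append]
              exact (List.cons.injEq _ _ _ _ ▸ this).2
            have key : ∀ u v, (u = v ∨ ¬ G.Adj u v) → proj u v t = proj u v (p ++ s) := by
              intro u v hgood
              by_cases hau : a = u
              · subst hau
                exact case1 v hgood
              by_cases hav : a = v
              · subst hav
                rw [proj_comm u a t, proj_comm u a (p ++ s)]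
                refine case1 u ?_
                rcases hgood with rfl | hnadj
                · exact Or.inl rfl
                · exact Or.inr (fun hadj => hnadj hadj.symm)
              · have := h u v hgood
                rw [proj_cons, if_neg (by tauto), proj_append, proj_cons,
                  if_neg (by tauto)] at this
                rw [proj_append]
                exact this
            have ht : WordEquiv G t (p ++ s) :=
              ih t (p ++ s) (by simpa using hl) key
            exact (ht.cons a).trans (move_front hpadj s).symm
  exact main w.length w w' le_rfl h

lemma wordEquiv_cons_cancel {a : α} {w w' : List α}
    (h : WordEquiv G (a :: w) (a :: w')) : WordEquiv G w w' := by
  apply equiv_of_proj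
  intro u v hgood
  have hpq := proj_eq_of_wordEquiv hgood h
  rw [proj_cons, proj_cons] at hpq
  by_cases ha : a = u ∨ a = v
  · rw [if_pos ha, if_pos ha] at hpq
    exact (List.cons.injEq _ _ _ _ ▸ hpq).2
  · rwa [if_neg ha, if_neg ha] at hpq

lemma wordEquiv_append_cancel {u : List α} {w w' : List α}
    (h : WordEquiv G (u ++ w) (u ++ w')) : WordEquiv G w w' := by
  induction u with
  | nil => simpa using h
  | cons c t ih => exact ih (wordEquiv_cons_cancel (by simpa using h))

/-- if `w` is equivalent to a word starting with `a`, then everything before the first `a`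
in `w` is adjacent to `a` -/
lemma equiv_cons_structure {w u : List α} {a : α} (h : WordEquiv G w (a :: u)) :
    ∃ p s, w = p ++ a :: s ∧ a ∉ p ∧ ∀ b ∈ p, G.Adj a b := by
  apply head_structure
  · exact (wordEquiv_perm h).mem_iff.2 (List.mem_cons_self)
  · intro b hba hnadj
    have := proj_eq_of_wordEquiv (Or.inr hnadj) h
    rw [this, proj_cons, if_pos (Or.inl rfl)]
    rfl

end ProjHard

section Reduced
variable {α : Type*} [DecidableEq α] {G : SimpleGraph α}

lemma getElem_append_len {p y : List α} {m : ℕ} (hm : m < y.length)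
    (h : p.length + m < (p ++ y).length) : (p ++ y)[p.length + m] = y[m] := by
  rw [List.getElem_append_right (Nat.le_add_right _ _)]
  congr 1
  omega

/-- decomposition form of reducedness -/
def Reduced' (G : SimpleGraph α) (w : List α) : Prop :=
  ∀ p q d (c : α), w = p ++ c :: q ++ c :: d → ∃ b ∈ q, b ≠ c ∧ ¬ G.Adj b c

lemma isGReduced_iff_reduced' {V : Type*} {G : SimpleGraph V} {w : List V} :
    IsGReduced G w ↔ Reduced' G w := by
  constructor
  · intro h p q d c hw
    subst hw
    set w := p ++ c :: q ++ c :: d with hw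
    have hlen : w.length = p.length + (q.length + d.length + 2) := by
      simp [hw]; omega
    have hi : p.length < w.length := by omega
    have hj : p.length + (q.length + 1) < w.length := by omega
    have hgi : w.get ⟨p.length, hi⟩ = c := by
      simp only [List.get_eq_getElem, hw]
      rw [List.getElem_append_left (by simp : p.length < (p ++ c :: q).length)]
      rw [List.getElem_append_right (le_refl p.length)]
      simp
    have hgj : w.get ⟨p.length + (q.length + 1), hj⟩ = c := by
      simp only [List.get_eq_getElem, hw]
      rw [List.getElem_append_right (by simp : (p ++ c :: q).length ≤ p.length + (q.length + 1))]
      simp only [show p.length + (q.length + 1) - (p ++ c :: q).length = 0 from by simp]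
      simp
    obtain ⟨k, hik, hkj, hne, hnadj⟩ := h ⟨p.length, hi⟩ ⟨p.length + (q.length + 1), hj⟩
      (by simp [Fin.lt_def]) (by rw [hgi, hgj])
    have hk1 : p.length < k.1 := hik
    have hk2 : k.1 < p.length + (q.length + 1) := hkj
    obtain ⟨m, hkm, hmq⟩ : ∃ m, k.1 = p.length + (m + 1) ∧ m < q.length :=
      ⟨k.1 - p.length - 1, by omega, by omega⟩
    have hgk : w.get k = q[m]'hmq := by
      simp only [List.get_eq_getElem, hw]
      rw [List.getElem_append_left (by simp; omega : k.1 < (p ++ c :: q).length)]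
      rw [List.getElem_append_right (by omega : p.length ≤ k.1)]
      simp only [show k.1 - p.length = m + 1 from by omega, List.getElem_cons_succ]
    exact ⟨w.get k, hgk ▸ List.getElem_mem hmq, by rwa [hgi] at hne, by rwa [hgi] at hnadj⟩
  · intro h i j hij hgij
    set c := w.get i with hc
    have hij' : i.1 < j.1 := hij
    have hgi' : w[i.1] = c := by rw [hc]; simp [List.get_eq_getElem]
    have hgj' : w[j.1] = c := by rw [hgij]; simp [List.get_eq_getElem]
    have hw : w = (w.take i.1 ++ c :: (w.drop (i.1+1)).take (j.1 - (i.1+1))) ++ c :: w.drop (j.1+1) := by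
      rw [List.append_assoc, List.cons_append]
      conv_lhs => rw [← List.take_append_drop i.1 w]
      congr 1
      rw [List.drop_eq_getElem_cons i.2, hgi']
      congr 1
      conv_lhs => rw [← List.take_append_drop (j.1 - (i.1+1)) (w.drop (i.1+1))]
      congr 1
      rw [List.drop_drop, show i.1 + 1 + (j.1 - (i.1+1)) = j.1 from by omega,
        List.drop_eq_getElem_cons j.2, hgj']
    obtain ⟨b, hbq, hbc, hnadj⟩ := h _ _ _ _ hw
    obtain ⟨m, hm, hbm⟩ := List.mem_iff_getElem.1 hbq
    have hmlt : m < j.1 - (i.1 + 1) := by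
      have h2 := hm
      simp only [List.length_take, List.length_drop] at h2
      omega
    have hk : i.1 + 1 + m < w.length := by have := j.2; omega
    refine ⟨⟨i.1 + 1 + m, hk⟩, by simp [Fin.lt_def]; omega, by simp [Fin.lt_def]; omega, ?_, ?_⟩
    · have hwk : w.get ⟨i.1+1+m, hk⟩ = b := by
        rw [← hbm, List.getElem_take, List.getElem_drop]
        simp [List.get_eq_getElem]
      rw [hwk]; exact hbc
    · have hwk : w.get ⟨i.1+1+m, hk⟩ = b := by
        rw [← hbm, List.getElem_take, List.getElem_drop]
        simp [List.get_eq_getElem]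
      rw [hwk]; exact hnadj

/-- tail of a reduced word is reduced -/
lemma Reduced'.tail {a : α} {w : List α} (h : Reduced' G (a :: w)) : Reduced' G w :=
  fun p q d c hw => h (a :: p) q d c (by rw [hw]; rfl)

end Reduced

section Reduced2
variable {α : Type*} [DecidableEq α] {G : SimpleGraph α}

lemma Reduced'.remove_middle {a : α} {p s : List α} (h : Reduced' G (p ++ a :: s))
    (hap : a ∉ p) (hpadj : ∀ b ∈ p, G.Adj a b) : Reduced' G (p ++ s) := by
  intro A Q D c hdec
  rw [List.append_assoc, List.cons_append] at hdec
  rcases List.append_eq_append_iff.1 hdec with ⟨e, hA, hs⟩ | ⟨e, hp, he⟩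
  · -- both c's inside s
    subst hA hs
    exact h (p ++ a :: e) Q D c (by simp)
  · cases e with
    | nil =>
        simp only [List.nil_append] at he
        subst hp
        simp only [List.append_nil] at *
        exact h (A ++ [a]) Q D c (by rw [← he]; simp)
    | cons c' m =>
        rw [List.cons_append] at he
        injection he with h1 h2
        subst h1
        have hcp : c ∈ p := by rw [hp]; simp
        have hadj_ac : G.Adj a c := hpadj c hcp
        rcases List.append_eq_append_iff.1 h2 with ⟨f, hmf, hf⟩ | ⟨f, hQ, hs2⟩
        · cases f with
          | nil =>
              simp only [List.append_nil] at hmf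
              simp only [List.nil_append] at hf
              subst hp
              subst hmf
              subst hf
              obtain ⟨b, hb, hbc, hnadj⟩ := h A (m ++ [a]) D c (by simp)
              rcases List.mem_append.1 hb with hb | hb
              · exact ⟨b, hb, hbc, hnadj⟩
              · simp only [List.mem_singleton] at hb
                subst hb
                exact absurd hadj_ac hnadj
          | cons c2 g =>
              rw [List.cons_append] at hf
              injection hf with h3 h4
              subst h3 hmf hp h4
              exact h A Q (g ++ a :: s) c (by simp)
        · -- first c in p, second in s
          subst hQ hp hs2
          obtain ⟨b, hb, hbc, hnadj⟩ := h A (m ++ a :: f) D c (by simp)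
          rcases List.mem_append.1 hb with hb | hb
          · exact ⟨b, List.mem_append.2 (Or.inl hb), hbc, hnadj⟩
          · rcases List.mem_cons.1 hb with rfl | hb
            · exact absurd hadj_ac hnadj
            · exact ⟨b, List.mem_append.2 (Or.inr hb), hbc, hnadj⟩

lemma reduced'_cons {a : α} {r : List α} (hr : Reduced' G r)
    (hB : ∀ p s, r = p ++ a :: s → a ∉ p → ∃ b ∈ p, ¬ G.Adj a b) :
    Reduced' G (a :: r) := by
  intro P Q D c hdec
  cases P with
  | nil =>
      have h1 : a = c ∧ r = Q ++ c :: D := by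
        simp only [List.nil_append, List.cons_append] at hdec
        exact ⟨(List.cons.injEq _ _ _ _ ▸ hdec).1, (List.cons.injEq _ _ _ _ ▸ hdec).2⟩
      obtain ⟨rfl, hr2⟩ := h1
      by_cases haQ : a ∈ Q
      · obtain ⟨q1, q2, rfl, hq1⟩ := first_occ haQ
        obtain ⟨b, hb, hnadj⟩ := hB q1 (q2 ++ a :: D) (by rw [hr2]; simp) hq1
        exact ⟨b, by simp [hb], fun hba => hq1 (hba ▸ hb), fun h' => hnadj h'.symm⟩
      · obtain ⟨b, hb, hnadj⟩ := hB Q D hr2 haQ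
        exact ⟨b, hb, fun hba => haQ (hba ▸ hb), fun h' => hnadj h'.symm⟩
  | cons a' P' =>
      simp only [List.cons_append, List.append_assoc] at hdec
      injection hdec with h1 h2
      refine hr P' Q D c ?_
      rw [h2]
      simp

lemma first_witness_cons {a : α} {t : List α} (h : Reduced' G (a :: t)) :
    ∀ q d, t = q ++ a :: d → a ∉ q → ∃ b ∈ q, ¬ G.Adj a b := by
  intro q d hdec _
  obtain ⟨b, hb, _, hnadj⟩ := h [] q d a (by rw [hdec]; rfl)
  exact ⟨b, hb, fun h' => hnadj h'.symm⟩

lemma first_witness_middle {a : α} {p s : List α} (h : Reduced' G (p ++ a :: s))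
    (hap : a ∉ p) (hpadj : ∀ b ∈ p, G.Adj a b) :
    ∀ q d, p ++ s = q ++ a :: d → a ∉ q → ∃ b ∈ q, ¬ G.Adj a b := by
  intro q d hdec haq
  have has : a ∈ s := by
    have : a ∈ p ++ s := by rw [hdec]; simp
    rcases List.mem_append.1 this with h' | h'
    · exact absurd h' hap
    · exact h'
  obtain ⟨s1, s2, rfl, hs1⟩ := first_occ has
  have hdec2 : (p ++ s1) ++ a :: s2 = q ++ a :: d := by rw [← hdec]; simp
  have hnot : a ∉ p ++ s1 := by
    intro h'
    rcases List.mem_append.1 h' with h' | h'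
    · exact hap h'
    · exact hs1 h'
  obtain ⟨h5, h6⟩ := first_occ_unique hdec2 hnot haq
  subst h5 h6
  obtain ⟨b, hb, hbc, hnadj⟩ := h p s1 s2 a (by simp)
  exact ⟨b, List.mem_append.2 (Or.inr hb), fun h' => hnadj h'.symm⟩

lemma not_equiv_cons_of_witness {w u : List α} {a : α}
    (hdecomp : ∀ q d, w = q ++ a :: d → a ∉ q → ∃ b ∈ q, ¬ G.Adj a b)
    (h : WordEquiv G w (a :: u)) : False := by
  obtain ⟨p, s, rfl, hap, hpadj⟩ := equiv_cons_structure h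
  obtain ⟨b, hb, hnadj⟩ := hdecomp p s rfl hap
  exact hnadj (hpadj b hb)

end Reduced2

section Blow
variable {α : Type*} [DecidableEq α] {G : SimpleGraph α}

/-- expansion of a weighted word: letter `(a, n)` becomes `n+1` copies of `a` -/
def blow (z : List (α × ℕ)) : List α := (z.map (fun p => List.replicate (p.2+1) p.1)).flatten

@[simp] lemma blow_nil : blow ([] : List (α × ℕ)) = [] := rfl

@[simp] lemma blow_cons (a : α) (n : ℕ) (z : List (α × ℕ)) :
    blow ((a, n) :: z) = List.replicate (n+1) a ++ blow z := by simp [blow]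

@[simp] lemma blow_append (z z' : List (α × ℕ)) :
    blow (z ++ z') = blow z ++ blow z' := by simp [blow]

lemma blow_cons_eq (a : α) (n : ℕ) (z : List (α × ℕ)) :
    blow ((a, n) :: z) = a :: (List.replicate n a ++ blow z) := by
  simp [List.replicate_succ]

lemma mem_blow {a : α} {z : List (α × ℕ)} : a ∈ blow z ↔ a ∈ z.map Prod.fst := by
  induction z with
  | nil => simp
  | cons q t ih =>
      obtain ⟨b, n⟩ := q
      simp [List.mem_replicate, ih]

lemma blow_equiv {z z' : List (α × ℕ)}
    (h : WordEquiv (G.comap Prod.fst) z z') : WordEquiv G (blow z) (blow z') := by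
  induction h with
  | refl => exact WordEquiv.rfl
  | tail _ hs ih =>
      obtain ⟨A, B, u, v, huv, rfl, rfl⟩ := hs
      refine ih.trans ?_
      obtain ⟨u, m⟩ := u
      obtain ⟨v, n⟩ := v
      have hadj : G.Adj u v := huv
      have key : WordEquiv G
          (List.replicate (m+1) u ++ (List.replicate (n+1) v ++ blow B))
          (List.replicate (n+1) v ++ (List.replicate (m+1) u ++ blow B)) := by
        have := move_front_replicate (G := G) (a := v) (p := List.replicate (m+1) u)
          (fun b hb => by rw [List.eq_of_mem_replicate hb]; exact hadj.symm) (n+1) (blow B)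
        simpa [List.append_assoc] using this
      simpa [List.append_assoc] using key.append_left (blow A)

lemma equiv_fst {z z' : List (α × ℕ)}
    (h : WordEquiv (G.comap Prod.fst) z z') :
    WordEquiv G (z.map Prod.fst) (z'.map Prod.fst) := by
  induction h with
  | refl => exact WordEquiv.rfl
  | tail _ hs ih =>
      obtain ⟨A, B, u, v, huv, rfl, rfl⟩ := hs
      refine ih.trans (wordEquiv_of_adjSwap ?_)
      exact ⟨A.map Prod.fst, B.map Prod.fst, u.1, v.1, huv, by simp, by simp⟩

lemma lift_fst {z : List (α × ℕ)} {r' : List α}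
    (h : WordEquiv G (z.map Prod.fst) r') :
    ∃ z', WordEquiv (G.comap Prod.fst) z z' ∧ z'.map Prod.fst = r' := by
  induction h with
  | refl => exact ⟨z, WordEquiv.rfl, rfl⟩
  | tail _ hs ih =>
      obtain ⟨z₁, hz₁, hfst⟩ := ih
      obtain ⟨A, B, u, v, huv, h1, h2⟩ := hs
      rw [h1] at hfst
      obtain ⟨zA, rest, rfl, hA, hrest⟩ := List.map_eq_append_iff.1 hfst
      obtain ⟨qu, rest2, rfl, hqu, hrest2⟩ := List.map_eq_cons_iff.1 hrest
      obtain ⟨qv, zB, rfl, hqv, hB⟩ := List.map_eq_cons_iff.1 hrest2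
      refine ⟨zA ++ qv :: qu :: zB, hz₁.tail ?_, by simp [hA, hqu, hqv, hB, h2]⟩
      exact ⟨zA, zB, qu, qv, by simp [SimpleGraph.comap_adj, hqu, hqv, huv], rfl, rfl⟩

lemma fst_filter_eq_of_equiv {z z' : List (α × ℕ)}
    (h : WordEquiv (G.comap Prod.fst) z z') (u : α) :
    z.filter (fun q => q.1 == u) = z'.filter (fun q => q.1 == u) := by
  refine filter_eq_of_wordEquiv _ (fun x y hadj hx hy => ?_) h
  simp only [beq_iff_eq] at hx hy
  have : G.Adj x.1 y.1 := hadj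
  rw [hx, hy] at this
  exact G.irrefl this

lemma eq_of_fst_and_filters : ∀ {z z' : List (α × ℕ)},
    z.map Prod.fst = z'.map Prod.fst →
    (∀ u : α, z.filter (fun q => q.1 == u) = z'.filter (fun q => q.1 == u)) → z = z' := by
  intro z
  induction z with
  | nil =>
      intro z' hfst _
      cases z' with
      | nil => rfl
      | cons q t => simp at hfst
  | cons q t ih =>
      intro z' hfst hfil
      cases z' with
      | nil => simp at hfst
      | cons q' t' =>
          obtain ⟨a, m⟩ := q
          obtain ⟨a', m'⟩ := q'
          simp only [List.map_cons, List.cons.injEq] at hfst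
          obtain ⟨ha, htl⟩ := hfst
          subst ha
          have h1 := hfil a
          rw [List.filter_cons, List.filter_cons, if_pos (by simp), if_pos (by simp)] at h1
          injection h1 with h2 h3
          injection h2 with h4 h5
          subst h5
          congr 1
          refine ih htl (fun u => ?_)
          by_cases hu : u = a
          · subst hu
            exact h3
          · have h5 := hfil u
            rw [List.filter_cons, List.filter_cons, if_neg (by simp; exact fun h => hu h.symm),
              if_neg (by simp; exact fun h => hu h.symm)] at h5
            exact h5

lemma proj_blow_head (u v : α) : ∀ z : List (α × ℕ),
    (proj u v (blow z)).head? = (proj u v (z.map Prod.fst)).head? := by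
  intro z
  induction z with
  | nil => rfl
  | cons q t ih =>
      obtain ⟨a, n⟩ := q
      rw [blow_cons, proj_append, List.map_cons, proj_cons]
      by_cases h : a = u ∨ a = v
      · rw [if_pos h]
        have : proj u v (List.replicate (n+1) a) = List.replicate (n+1) a := by
          rw [proj, List.filter_eq_self]
          intro b hb
          rw [List.eq_of_mem_replicate hb]
          simpa using h
        rw [this]
        simp [List.replicate_succ]
      · rw [if_neg h]
        have : proj u v (List.replicate (n+1) a) = [] := by
          rw [proj, List.filter_eq_nil_iff]
          intro b hb
          rw [List.eq_of_mem_replicate hb]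
          simpa using h
        rw [this, List.nil_append]
        exact ih

end Blow

section Main
variable {α : Type*} [DecidableEq α] {G : SimpleGraph α}

lemma blow_witness {a : α} {zt : List (α × ℕ)}
    (hw : ∀ q d, zt.map Prod.fst = q ++ a :: d → a ∉ q → ∃ b ∈ q, ¬ G.Adj a b) :
    ∀ q d, blow zt = q ++ a :: d → a ∉ q → ∃ b ∈ q, ¬ G.Adj a b := by
  intro q d hdec haq
  have hab : a ∈ zt.map Prod.fst := by
    rw [← mem_blow, hdec]
    simp
  obtain ⟨q1, d1, hq1, hnq1⟩ := first_occ hab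
  obtain ⟨zq1, rest, rfl, hzq1, hrest⟩ := List.map_eq_append_iff.1 hq1
  obtain ⟨qa, zd1, rfl, hqa, hzd1⟩ := List.map_eq_cons_iff.1 hrest
  obtain ⟨b, hb, hnadj⟩ := hw q1 d1 hq1 hnq1
  have hblow : blow (zq1 ++ qa :: zd1) = blow zq1 ++ a :: (List.replicate qa.2 a ++ blow zd1) := by
    obtain ⟨a', k⟩ := qa
    have : a' = a := hqa
    subst this
    simp [List.replicate_succ]
  have hnb : a ∉ blow zq1 := fun hmem => hnq1 (hzq1 ▸ mem_blow.1 hmem)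
  obtain ⟨hq, _⟩ := first_occ_unique (hblow.symm.trans hdec) hnb haq
  subst hq
  exact ⟨b, mem_blow.2 (hzq1 ▸ hb), hnadj⟩

lemma inj_main : ∀ (N : ℕ) {z z' : List (α × ℕ)}, z.length ≤ N →
    Reduced' G (z.map Prod.fst) → Reduced' G (z'.map Prod.fst) →
    WordEquiv G (blow z) (blow z') → WordEquiv (G.comap Prod.fst) z z' := by
  intro N
  induction N with
  | zero =>
      intro z z' hlen _ _ h
      have hz : z = [] := List.eq_nil_of_length_eq_zero (Nat.le_zero.1 hlen)
      subst hz
      have hperm := wordEquiv_perm h.symm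
      have : blow z' = [] := hperm.eq_nil
      cases z' with
      | nil => exact WordEquiv.rfl
      | cons q t => rw [blow_cons_eq] at this; simp at this
  | succ N ih =>
      intro z z' hlen hred hred' h
      cases z with
      | nil =>
          have hperm := wordEquiv_perm h.symm
          have : blow z' = [] := hperm.eq_nil
          cases z' with
          | nil => exact WordEquiv.rfl
          | cons q t => rw [blow_cons_eq] at this; simp at this
      | cons q zt =>
          obtain ⟨a, m⟩ := q
          have hredt : Reduced' G (zt.map Prod.fst) := by
            have : Reduced' G (a :: zt.map Prod.fst) := by simpa using hred
            exact this.tail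
          -- a occurs in z'
          have hmema : a ∈ z'.map Prod.fst := by
            rw [← mem_blow]
            refine (wordEquiv_perm h).mem_iff.1 ?_
            rw [blow_cons_eq]
            exact List.mem_cons_self
          -- every relevant projection of z'.map fst starts with a
          have hprojhead : ∀ b, b ≠ a → ¬ G.Adj a b →
              (proj a b (z'.map Prod.fst)).head? = some a := by
            intro b hba hnadj
            rw [← proj_blow_head, ← proj_eq_of_wordEquiv (Or.inr hnadj) h]
            rw [blow_cons_eq, proj_cons, if_pos (Or.inl rfl)]
            rfl
          obtain ⟨p, s, hps, hap, hpadj⟩ := head_structure hmema hprojhead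
          obtain ⟨zp, rest, rfl, hzp, hrest⟩ := List.map_eq_append_iff.1 hps
          obtain ⟨qa, zs, rfl, hqa, hzs⟩ := List.map_eq_cons_iff.1 hrest
          obtain ⟨a', n⟩ := qa
          have ha' : a = a' := hqa.symm
          subst ha'
          have hmov : WordEquiv (G.comap Prod.fst) (zp ++ (a, n) :: zs) ((a, n) :: (zp ++ zs)) := by
            refine move_front (fun b hb => ?_) zs
            have : b.1 ∈ p := hzp ▸ (List.mem_map_of_mem (f := Prod.fst) hb)
            exact hpadj b.1 this
          have hblow2 : WordEquiv G (List.replicate (m+1) a ++ blow zt)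
              (List.replicate (n+1) a ++ blow (zp ++ zs)) := by
            have := h.trans (blow_equiv hmov)
            simpa using this
          -- the first-occurrence witnesses on both sides
          have hw1 : ∀ q d, blow zt = q ++ a :: d → a ∉ q → ∃ b ∈ q, ¬ G.Adj a b := by
            refine blow_witness ?_
            refine first_witness_cons ?_
            simpa using hred
          have hw2 : ∀ q d, blow (zp ++ zs) = q ++ a :: d → a ∉ q → ∃ b ∈ q, ¬ G.Adj a b := by
            refine blow_witness ?_
            have hm : (zp ++ zs).map Prod.fst = p ++ s := by simp [hzp, hzs]
            rw [hm]
            refine first_witness_middle ?_ hap hpadj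
            rw [← hps]
            exact hred'
          -- m = n
          have hmn : m = n := by
            by_contra hne
            rcases Nat.lt_or_ge m n with hlt | hge
            · -- cancel m+1 copies of a
              have hcan : WordEquiv G (blow zt)
                  (List.replicate (n - m) a ++ blow (zp ++ zs)) := by
                refine wordEquiv_append_cancel (u := List.replicate (m+1) a) ?_
                rw [← List.append_assoc, ← List.replicate_add]
                rw [show m + 1 + (n - m) = n + 1 from by omega]
                exact hblow2
              have : WordEquiv G (blow zt)
                  (a :: (List.replicate (n - m - 1) a ++ blow (zp ++ zs))) := by
                rwa [show n - m = (n - m - 1) + 1 from by omega, List.replicate_succ,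
                  List.cons_append] at hcan
              exact not_equiv_cons_of_witness hw1 this
            · have hlt : n < m := by omega
              have hcan : WordEquiv G (blow (zp ++ zs))
                  (List.replicate (m - n) a ++ blow zt) := by
                refine wordEquiv_append_cancel (u := List.replicate (n+1) a) ?_
                rw [← List.append_assoc, ← List.replicate_add]
                rw [show n + 1 + (m - n) = m + 1 from by omega]
                exact hblow2.symm
              have : WordEquiv G (blow (zp ++ zs))
                  (a :: (List.replicate (m - n - 1) a ++ blow zt)) := by
                rwa [show m - n = (m - n - 1) + 1 from by omega, List.replicate_succ,
                  List.cons_append] at hcan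
              exact not_equiv_cons_of_witness hw2 this
          subst hmn
          have hcan : WordEquiv G (blow zt) (blow (zp ++ zs)) :=
            wordEquiv_append_cancel (u := List.replicate (m+1) a) hblow2
          have hredps : Reduced' G ((zp ++ zs).map Prod.fst) := by
            have hm : (zp ++ zs).map Prod.fst = p ++ s := by simp [hzp, hzs]
            rw [hm]
            refine Reduced'.remove_middle ?_ hap hpadj
            rw [← hps]
            exact hred'
          have hlen' : zt.length ≤ N := by
            simp only [List.length_cons] at hlen
            omega
          have hih : WordEquiv (G.comap Prod.fst) zt (zp ++ zs) :=
            ih hlen' hredt hredps hcan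
          exact ((hih.cons (a, m)).trans hmov.symm : _)

lemma surj (G : SimpleGraph α) : ∀ w : List α,
    ∃ z : List (α × ℕ), Reduced' G (z.map Prod.fst) ∧ WordEquiv G w (blow z) := by
  intro w
  induction w with
  | nil =>
      refine ⟨[], ?_, WordEquiv.rfl⟩
      intro p q d c hh
      exfalso
      have := congrArg List.length hh
      simp at this
  | cons a t ih =>
      obtain ⟨z, hzred, hzeq⟩ := ih
      by_cases hdec : ∃ p s, z.map Prod.fst = p ++ a :: s ∧ a ∉ p ∧ ∀ b ∈ p, G.Adj a b
      · obtain ⟨p, s, hps, hap, hpadj⟩ := hdec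
        obtain ⟨zp, rest, rfl, hzp, hrest⟩ := List.map_eq_append_iff.1 hps
        obtain ⟨qa, zs, rfl, hqa, hzs⟩ := List.map_eq_cons_iff.1 hrest
        obtain ⟨a', n⟩ := qa
        have ha' : a = a' := hqa.symm
        subst ha'
        have hmov : WordEquiv (G.comap Prod.fst) (zp ++ (a, n) :: zs) ((a, n) :: (zp ++ zs)) := by
          refine move_front (fun b hb => ?_) zs
          have : b.1 ∈ p := hzp ▸ (List.mem_map_of_mem (f := Prod.fst) hb)
          exact hpadj b.1 this
        have hmov2 : WordEquiv (G.comap Prod.fst) ((a, n+1) :: (zp ++ zs))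
            (zp ++ (a, n+1) :: zs) := by
          refine (move_front (fun b hb => ?_) zs).symm
          have : b.1 ∈ p := hzp ▸ (List.mem_map_of_mem (f := Prod.fst) hb)
          exact hpadj b.1 this
        refine ⟨zp ++ (a, n+1) :: zs, ?_, ?_⟩
        · have hm : (zp ++ (a, n+1) :: zs).map Prod.fst = p ++ a :: s := by simp [hzp, hzs]
          rw [hm, ← hps]
          exact hzred
        · have h1 : WordEquiv G (a :: t) (a :: blow (zp ++ (a, n) :: zs)) := hzeq.cons a
          have h2 : WordEquiv G (a :: blow (zp ++ (a, n) :: zs))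
              (a :: blow ((a, n) :: (zp ++ zs))) := (blow_equiv hmov).cons a
          have h3 : a :: blow ((a, n) :: (zp ++ zs)) = blow ((a, n+1) :: (zp ++ zs)) := by
            simp [List.replicate_succ]
          have h4 : WordEquiv G (blow ((a, n+1) :: (zp ++ zs))) (blow (zp ++ (a, n+1) :: zs)) :=
            blow_equiv hmov2
          exact ((h1.trans h2).trans (h3 ▸ WordEquiv.rfl)).trans h4
      · push_neg at hdec
        refine ⟨(a, 0) :: z, ?_, ?_⟩
        · have : Reduced' G (a :: z.map Prod.fst) := by
            refine reduced'_cons hzred (fun p s hps hap => ?_)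
            obtain ⟨b, hb, hnadj⟩ := hdec p s hps hap
            exact ⟨b, hb, hnadj⟩
          simpa using this
        · have : blow ((a, 0) :: z) = a :: blow z := by simp
          rw [this]
          exact hzeq.cons a

end Main

section Tsum
variable {α : Type*} [DecidableEq α]

lemma zip_fst_snd : ∀ z : List (α × ℕ), (z.map Prod.fst).zip (z.map Prod.snd) = z := by
  intro z
  induction z with
  | nil => rfl
  | cons q t ih => simp [ih]

lemma ofReal_div_eq_tsum {x : ℝ} (h0 : 0 ≤ x) (h1 : x < 1) :
    ENNReal.ofReal (x / (1 - x)) = ∑' n : ℕ, (ENNReal.ofReal x) ^ (n + 1) := by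
  have hpos : (0:ℝ) < 1 - x := by linarith
  have h2 : ∑' n : ℕ, ENNReal.ofReal x ^ (n+1)
      = ENNReal.ofReal x * ∑' n : ℕ, ENNReal.ofReal x ^ n := by
    rw [← ENNReal.tsum_mul_left]
    exact tsum_congr (fun n => by rw [pow_succ, mul_comm])
  rw [h2, ENNReal.tsum_geometric, ENNReal.ofReal_div_of_pos hpos, div_eq_mul_inv]
  congr 1
  rw [ENNReal.ofReal_sub 1 h0, ENNReal.ofReal_one]

/-- cons equivalence for length-constrained lists -/
def vecCons (n : ℕ) : ℕ × {l : List ℕ // l.length = n} ≃ {l : List ℕ // l.length = n + 1} where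
  toFun q := ⟨q.1 :: q.2.1, by simp [q.2.2]⟩
  invFun l := (l.1.headI, ⟨l.1.tail, by
    have h := l.2
    cases hl : l.1 with
    | nil => rw [hl] at h; simp at h
    | cons a t => rw [hl] at h; simpa using h⟩)
  left_inv q := by
    obtain ⟨n', ⟨k, hk⟩⟩ := q
    simp
  right_inv l := by
    obtain ⟨l, hl⟩ := l
    cases l with
    | nil => simp at hl
    | cons a t => simp

lemma prod_map_tsum {X Y : α → ℝ≥0∞} (hXY : ∀ a, Y a = ∑' n : ℕ, X a ^ (n+1)) :
    ∀ w : List α, (w.map Y).prod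
      = ∑' k : {l : List ℕ // l.length = w.length}, ((blow (w.zip k.1)).map X).prod := by
  intro w
  induction w with
  | nil =>
      rw [tsum_eq_single (⟨[], rfl⟩ : {l : List ℕ // l.length = ([] : List α).length})]
      · simp
      · intro b hb
        exfalso
        exact hb (Subtype.ext (List.eq_nil_of_length_eq_zero b.2))
  | cons a t ihw =>
      have step1 : ((a :: t).map Y).prod
          = (∑' n : ℕ, X a ^ (n+1)) *
            (∑' k : {l : List ℕ // l.length = t.length}, ((blow (t.zip k.1)).map X).prod) := by
        rw [List.map_cons, List.prod_cons, ihw, hXY a]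
      rw [step1, ← ENNReal.tsum_mul_right]
      have step2 : ∀ n : ℕ,
          X a ^ (n+1) * (∑' k : {l : List ℕ // l.length = t.length},
            ((blow (t.zip k.1)).map X).prod)
          = ∑' k : {l : List ℕ // l.length = t.length},
              X a ^ (n+1) * ((blow (t.zip k.1)).map X).prod := by
        intro n
        rw [ENNReal.tsum_mul_left]
      rw [tsum_congr step2, ← ENNReal.tsum_prod]
      simp only [List.length_cons]
      rw [← Equiv.tsum_eq (vecCons t.length)
        (fun k : {l : List ℕ // l.length = t.length + 1} => ((blow ((a :: t).zip k.1)).map X).prod)]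
      refine tsum_congr (fun q => ?_)
      obtain ⟨n, ⟨k, hk⟩⟩ := q
      simp only [vecCons, Equiv.coe_fn_mk]
      rw [List.zip_cons_cons, blow_cons]
      simp [List.prod_replicate, pow_succ]
  
end Tsum

section Assembly
variable {G : SimpleGraph V}

private noncomputable def repW (G : SimpleGraph V)
    (c : {c : Quotient (wordSetoid G) // ∃ w, IsGReduced G w ∧ Quotient.mk (wordSetoid G) w = c}) :
    List V := c.2.choose

private lemma repW_spec (G : SimpleGraph V)
    (c : {c : Quotient (wordSetoid G) // ∃ w, IsGReduced G w ∧ Quotient.mk (wordSetoid G) w = c}) :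
    IsGReduced G (repW G c) ∧ Quotient.mk (wordSetoid G) (repW G c) = c.1 := c.2.choose_spec

private noncomputable def expandMap (G : SimpleGraph V) :
    (Σ c : {c : Quotient (wordSetoid G) // ∃ w, IsGReduced G w ∧ Quotient.mk (wordSetoid G) w = c},
      {l : List ℕ // l.length = (repW G c).length}) → Quotient (wordSetoid G) :=
  fun p => Quotient.mk (wordSetoid G) (blow ((repW G p.1).zip p.2.1))

private lemma expandMap_bijective (G : SimpleGraph V) : Function.Bijective (expandMap G) := by
  constructor
  · rintro ⟨c, k⟩ ⟨c', k'⟩ hpq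
    have hequiv : WordEquiv G (blow ((repW G c).zip k.1)) (blow ((repW G c').zip k'.1)) :=
      Quotient.exact hpq
    have hfst1 : ((repW G c).zip k.1).map Prod.fst = repW G c :=
      List.map_fst_zip (le_of_eq k.2.symm)
    have hfst2 : ((repW G c').zip k'.1).map Prod.fst = repW G c' :=
      List.map_fst_zip (le_of_eq k'.2.symm)
    have hred1 : Reduced' G (((repW G c).zip k.1).map Prod.fst) := by
      rw [hfst1]; exact isGReduced_iff_reduced'.1 (repW_spec G c).1
    have hred2 : Reduced' G (((repW G c').zip k'.1).map Prod.fst) := by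
      rw [hfst2]; exact isGReduced_iff_reduced'.1 (repW_spec G c').1
    have hz := inj_main (((repW G c).zip k.1).length) le_rfl hred1 hred2 hequiv
    have hfsteq : WordEquiv G (repW G c) (repW G c') := by
      have h := equiv_fst hz
      rwa [hfst1, hfst2] at h
    have hc : c = c' := by
      apply Subtype.ext
      rw [← (repW_spec G c).2, ← (repW_spec G c').2]
      exact Quotient.sound hfsteq
    subst hc
    have hk : k = k' := by
      apply Subtype.ext
      have heqz : (repW G c).zip k.1 = (repW G c).zip k'.1 :=
        eq_of_fst_and_filters (by rw [hfst1, hfst2])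
          (fun u => fst_filter_eq_of_equiv hz u)
      calc k.1 = ((repW G c).zip k.1).map Prod.snd :=
            (List.map_snd_zip (le_of_eq k.2)).symm
        _ = ((repW G c).zip k'.1).map Prod.snd := by rw [heqz]
        _ = k'.1 := List.map_snd_zip (le_of_eq k'.2)
    rw [hk]
  · intro c
    obtain ⟨w, rfl⟩ := Quotient.exists_rep c
    obtain ⟨z, hzred, hzeq⟩ := surj G w
    have hc0mem : ∃ w', IsGReduced G w' ∧ Quotient.mk (wordSetoid G) w'
        = Quotient.mk (wordSetoid G) (z.map Prod.fst) :=
      ⟨z.map Prod.fst, isGReduced_iff_reduced'.2 hzred, rfl⟩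
    set c0 : {c : Quotient (wordSetoid G) // ∃ w, IsGReduced G w ∧ Quotient.mk (wordSetoid G) w = c} :=
      ⟨Quotient.mk (wordSetoid G) (z.map Prod.fst), hc0mem⟩ with hc0
    have h2 : Quotient.mk (wordSetoid G) (repW G c0)
        = Quotient.mk (wordSetoid G) (z.map Prod.fst) := (repW_spec G c0).2
    have hrc0 : WordEquiv G (z.map Prod.fst) (repW G c0) := by
      have h3 : WordEquiv G (repW G c0) (z.map Prod.fst) := Quotient.exact h2
      exact h3.symm
    obtain ⟨z₂, hz₂, hfst₂⟩ := lift_fst hrc0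
    refine ⟨⟨c0, ⟨z₂.map Prod.snd, by rw [← hfst₂]; simp⟩⟩, ?_⟩
    show Quotient.mk (wordSetoid G) (blow ((repW G c0).zip (z₂.map Prod.snd)))
      = Quotient.mk (wordSetoid G) w
    rw [← hfst₂, zip_fst_snd]
    exact Quotient.sound (((hzeq.trans (blow_equiv hz₂)).symm : WordEquiv G (blow z₂) w))

end Assembly

/-- for `x ∈ [0,1)^V`, `tildeF G x = f_G ((x_v/(1-x_v))_v)`. -/
theorem tildeF_eq_redF (G : SimpleGraph V) (x : V → ℝ)
    (hx : ∀ v, x v ∈ Set.Ico (0 : ℝ) 1) :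
    tildeF G x = redF G (fun v => x v / (1 - x v)) := by
  have hXY : ∀ v, ENNReal.ofReal (x v / (1 - x v))
      = ∑' n : ℕ, (ENNReal.ofReal (x v)) ^ (n+1) :=
    fun v => ofReal_div_eq_tsum (hx v).1 (hx v).2
  have h1 : tildeF G x
      = ∑' p : (Σ c : {c : Quotient (wordSetoid G) // ∃ w, IsGReduced G w ∧
            Quotient.mk (wordSetoid G) w = c}, {l : List ℕ // l.length = (repW G c).length}),
          ((blow ((repW G p.1).zip p.2.1)).map (fun v => ENNReal.ofReal (x v))).prod := by
    unfold tildeF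
    rw [← Equiv.tsum_eq (Equiv.ofBijective _ (expandMap_bijective G))
      (classProd G (fun v => ENNReal.ofReal (x v)))]
    exact tsum_congr (fun p => rfl)
  have h4 := ENNReal.tsum_sigma
    (β := fun c : {c : Quotient (wordSetoid G) // ∃ w, IsGReduced G w ∧
        Quotient.mk (wordSetoid G) w = c} => {l : List ℕ // l.length = (repW G c).length})
    (fun c k => ((blow ((repW G c).zip k.1)).map (fun v => ENNReal.ofReal (x v))).prod)
  rw [h1, h4]
  unfold redF
  refine tsum_congr (fun c => ?_)
  rw [← prod_map_tsum hXY (repW G c), ← (repW_spec G c).2]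
  rfl
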